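/- In the Minimum Broadcast Time reduction: let G = (V, E) be an undirected graph and u ∈ V. Define α_{vw} = 1 if {v,w} ∈ E and α_{vw} = ∞ otherwise, β_{vw} = 1, message size m = 1. Then G admits a broadcast from u completing in t synchronous rounds (in each round, each informed vertex may inform one neighbor) if and only if there is a broadcast tree in the non-homogeneous one-ported linear cost model rooted at u with completion cost at most 2t, where each edge transmission costs α_{vw} + β_{vw}·1 = 2 and a vertex performs its transmissions sequentially. -/
import Mathlib


open Finset

/-- A broadcast tree in binary-join form: in `node t s`, the root of `t` (also the root of
the combined tree), after finishing its earlier sends in `t`, sends the unit message to the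
root of `s`, which then broadcasts in `s`. -/
inductive BTree (V : Type*) : Type _ where
  | leaf : V → BTree V
  | node : BTree V → BTree V → BTree V

namespace BTree

variable {V : Type*}

def root : BTree V → V
  | leaf v => v
  | node t _ => t.root

def members [DecidableEq V] : BTree V → Finset V
  | leaf v => {v}
  | node t s => t.members ∪ s.members

def valid [DecidableEq V] : BTree V → Prop
  | leaf _ => True
  | node t s => t.valid ∧ s.valid ∧ Disjoint t.members s.members

/-- The time at which the root of the tree finishes its own (sequential) sends,
each send costing `α + β * 1 = 1 + 1 = 2` time units. -/
def busy : BTree V → ℝ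
  | leaf _ => 0
  | node t _ => t.busy + 2

/-- Completion time of the broadcast tree: the root performs its transmissions
sequentially, each costing `2`; a child starts broadcasting in its subtree only after
receiving the message. -/
def bcost : BTree V → ℝ
  | leaf _ => 0
  | node t s => max t.bcost (t.busy + 2 + s.bcost)

/-- All tree transmissions go along edges of `G` (elsewhere the latency is `∞`). -/
def edgesOK (G : SimpleGraph V) : BTree V → Prop
  | leaf _ => True
  | node t s => t.edgesOK G ∧ s.edgesOK G ∧ G.Adj t.root s.root

end BTree


set_option linter.unusedSectionVars false
set_option maxHeartbeats 1000000

namespace BTree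
variable {V : Type*}

def nsends : BTree V → ℕ
  | leaf _ => 0
  | node t _ => t.nsends + 1
def nbcost : BTree V → ℕ
  | leaf _ => 0
  | node t s => max t.nbcost (t.nsends + 1 + s.nbcost)

lemma busy_eq (T : BTree V) : T.busy = 2 * (T.nsends : ℝ) := by
  induction T with
  | leaf v => simp [busy, nsends]
  | node t s iht ihs => simp [busy, nsends, iht]; ring

lemma bcost_eq (T : BTree V) : T.bcost = 2 * (T.nbcost : ℝ) := by
  induction T with
  | leaf v => simp [bcost, nbcost]
  | node t s iht ihs =>
    simp only [bcost, nbcost, iht, ihs, busy_eq]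
    push_cast [Nat.cast_max]
    rw [mul_max_of_nonneg _ _ (by norm_num : (0:ℝ) ≤ 2)]
    ring_nf

lemma root_mem [DecidableEq V] (T : BTree V) : T.root ∈ T.members := by
  induction T with
  | leaf v => simp [root, members]
  | node t s iht ihs => simp only [root, members, mem_union]; exact Or.inl iht

end BTree

open BTree

section Fwd
variable {V : Type*} [Fintype V] [DecidableEq V]

noncomputable def build (u : V) (pa : V → V) (ti : V → ℕ) (tm : ℕ) :
    ℕ → V → ℕ → BTree V
  | 0, v, _ => .leaf v
  | _+1, v, 0 => .leaf v
  | fuel+1, v, k+1 =>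
    if h : (Finset.univ.filter fun c => c ≠ u ∧ pa c = v ∧ ti c = k+1).Nonempty then
      .node (build u pa ti tm (fuel+1) v k) (build u pa ti tm fuel h.choose tm)
    else build u pa ti tm (fuel+1) v k
termination_by fuel _ k => (fuel, k)

def pstep (u : V) (pa : V → V) (v : V) : V := if v = u then u else pa v

def isDesc (u : V) (pa : V → V) (v w : V) : Prop := ∃ n, (pstep u pa)^[n] w = v

variable {u : V} {pa : V → V} {ti : V → ℕ}

section lems
variable (ht : ∀ v, v ≠ u → ti (pa v) < ti v)
include ht

lemma ti_pstep (v : V) : ti (pstep u pa v) ≤ ti v := by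
  unfold pstep; split
  · subst ‹v = u›; exact le_rfl
  · exact (ht v ‹v ≠ u›).le

lemma ti_iter (n : ℕ) (w : V) : ti ((pstep u pa)^[n] w) ≤ ti w := by
  induction n with
  | zero => simp
  | succ n ih =>
    rw [Function.iterate_succ_apply']
    exact (ti_pstep ht _).trans ih

lemma isDesc_ti {v w : V} (h : isDesc u pa v w) : ti v ≤ ti w := by
  obtain ⟨n, hn⟩ := h; rw [← hn]; exact ti_iter ht n w

lemma isDesc_comp {c w : V} (h : isDesc u pa c w) (hc : c ≠ u) {v : V}
    (hp : pa c = v) : isDesc u pa v w := by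
  obtain ⟨n, hn⟩ := h
  exact ⟨n + 1, by rw [Function.iterate_succ_apply', hn, pstep, if_neg hc, hp]⟩

lemma isDesc_univ (w : V) : isDesc u pa u w := by
  generalize hti : ti w = k
  induction k using Nat.strong_induction_on generalizing w with
  | _ k ih =>
  by_cases hw : w = u
  · exact ⟨0, hw⟩
  · obtain ⟨n, hn⟩ := ih (ti (pa w)) (hti ▸ ht w hw) (pa w) rfl
    exact ⟨n + 1, by rw [Function.iterate_succ_apply, pstep, if_neg hw, hn]⟩

lemma isDesc_child' {v : V} : ∀ n (w : V), (pstep u pa)^[n] w = v → w ≠ v →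
    ∃ c, c ≠ u ∧ pa c = v ∧ isDesc u pa c w := by
  intro n
  induction n with
  | zero => exact fun w hn hw => absurd hn hw
  | succ n ih =>
    intro w hn hw
    rw [Function.iterate_succ_apply'] at hn
    set c := (pstep u pa)^[n] w with hc
    by_cases hcv : c = v
    · exact ih w hcv hw
    · have hcu : c ≠ u := by
        intro hcu
        rw [hcu, pstep, if_pos rfl] at hn
        exact hcv (hcu.trans hn)
      rw [pstep, if_neg hcu] at hn
      exact ⟨c, hcu, hn, n, hc.symm⟩

lemma isDesc_child {v w : V} (h : isDesc u pa v w) (hw : w ≠ v) :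
    ∃ c, c ≠ u ∧ pa c = v ∧ isDesc u pa c w := by
  obtain ⟨n, hn⟩ := h
  exact isDesc_child' ht n w hn hw

lemma isDesc_unique {v c c' w : V} (hc : c ≠ u) (hpc : pa c = v)
    (hc' : c' ≠ u) (hpc' : pa c' = v) (h1 : isDesc u pa c w)
    (h2 : isDesc u pa c' w) : c = c' := by
  obtain ⟨n, hn⟩ := h1
  obtain ⟨m, hm⟩ := h2
  wlog hnm : n ≤ m generalizing n m c c'
  · exact (this hc' hpc' hc hpc m hm n hn (le_of_not_ge hnm)).symm
  obtain ⟨j, rfl⟩ := Nat.exists_eq_add_of_le hnm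
  rw [Nat.add_comm, Function.iterate_add_apply, hn] at hm
  cases j with
  | zero => exact hm
  | succ j =>
    exfalso
    rw [Function.iterate_succ_apply, pstep, if_neg hc, hpc] at hm
    have := ti_iter ht j v
    rw [hm] at this
    exact absurd (hpc' ▸ ht c' hc') (by omega)

end lems
end Fwd

section Fwd
variable {V : Type*} [Fintype V] [DecidableEq V]
variable {u : V} {pa : V → V} {ti : V → ℕ} {tm : ℕ}

lemma build_succ (fuel v k) :
    build u pa ti tm (fuel+1) v (k+1) =
    if h : (Finset.univ.filter fun c => c ≠ u ∧ pa c = v ∧ ti c = k+1).Nonempty then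
      .node (build u pa ti tm (fuel+1) v k) (build u pa ti tm fuel h.choose tm)
    else build u pa ti tm (fuel+1) v k := by
  rw [build]

lemma build_root (fuel v k) : (build u pa ti tm fuel v k).root = v := by
  induction fuel generalizing k with
  | zero => rw [build]; rfl
  | succ fuel ih =>
    induction k with
    | zero => rw [build]; rfl
    | succ k ihk =>
      rw [build_succ]; split
      · exact ihk
      · exact ihk

section lems
variable (ht : ∀ v, v ≠ u → ti (pa v) < ti v)
include ht

lemma choose_spec' {v : V} {k : ℕ}
    (h : (Finset.univ.filter fun c => c ≠ u ∧ pa c = v ∧ ti c = k+1).Nonempty) :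
    h.choose ≠ u ∧ pa h.choose = v ∧ ti h.choose = k + 1 := by
  have := h.choose_spec
  simp only [mem_filter, mem_univ, true_and] at this
  exact this

lemma build_leaf_of_le (fuel v k) (hk : k ≤ ti v) :
    build u pa ti tm fuel v k = .leaf v := by
  induction fuel generalizing k with
  | zero => rw [build]
  | succ fuel ih =>
    induction k with
    | zero => rw [build]
    | succ k ihk =>
      rw [build_succ, dif_neg, ihk (by omega)]
      rintro ⟨c, hc⟩
      simp only [mem_filter, mem_univ, true_and] at hc
      have := ht c hc.1
      rw [hc.2.1] at this
      omega

lemma build_busy (fuel v k) (h : ti v ≤ k) :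
    (build u pa ti tm fuel v k).busy ≤ 2 * ((k : ℝ) - ti v) := by
  induction fuel generalizing k with
  | zero =>
    rw [build]
    show (0:ℝ) ≤ _
    have : (ti v : ℝ) ≤ k := by exact_mod_cast h
    linarith
  | succ fuel ih =>
    induction k with
    | zero =>
      rw [build]
      show (0:ℝ) ≤ _
      have : (ti v : ℝ) ≤ 0 := by exact_mod_cast h
      linarith
    | succ k ihk =>
      rw [build_succ]
      split
      · rename_i hne
        obtain ⟨hcu, hpc, hck⟩ := choose_spec' ht hne
        have hvk : ti v ≤ k := by have := ht _ hcu; rw [hpc] at this; omega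
        have := ihk hvk
        show (build u pa ti tm (fuel+1) v k).busy + 2 ≤ _
        push_cast
        push_cast at this
        linarith
      · by_cases hvk : ti v ≤ k
        · have := ihk hvk
          push_cast at this ⊢
          linarith
        · rw [build_leaf_of_le ht _ _ _ (by omega)]
          show (0:ℝ) ≤ _
          have : (ti v : ℝ) ≤ k + 1 := by exact_mod_cast h
          push_cast
          linarith

lemma build_bcost (fuel v k) (h1 : ti v ≤ k) (h2 : k ≤ tm) :
    (build u pa ti tm fuel v k).bcost ≤ 2 * ((tm : ℝ) - ti v) := by
  have hb : (ti v : ℝ) ≤ tm := by exact_mod_cast h1.trans h2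
  induction fuel generalizing v k with
  | zero =>
    rw [build]; show (0:ℝ) ≤ _; linarith
  | succ fuel ih =>
    induction k with
    | zero =>
      rw [build]; show (0:ℝ) ≤ _; linarith
    | succ k ihk =>
      rw [build_succ]
      split
      · rename_i hne
        obtain ⟨hcu, hpc, hck⟩ := choose_spec' ht hne
        have hvk : ti v ≤ k := by have := ht _ hcu; rw [hpc] at this; omega
        show max _ _ ≤ _
        apply max_le
        · exact ihk hvk (by omega)
        · have hbusy := build_busy (tm := tm) ht (fuel+1) v k hvk
          have hsub := ih hne.choose tm (by omega) le_rfl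
            (by exact_mod_cast (show ti hne.choose ≤ tm by omega))
          have hckR : (ti hne.choose : ℝ) = (k:ℝ) + 1 := by exact_mod_cast hck
          push_cast at hbusy hsub hckR ⊢
          linarith
      · by_cases hvk : ti v ≤ k
        · exact ihk hvk (by omega)
        · rw [build_leaf_of_le ht _ _ _ (by omega)]
          show (0:ℝ) ≤ _
          linarith

lemma build_mem_self (fuel v k) : v ∈ (build u pa ti tm fuel v k).members := by
  induction fuel generalizing k with
  | zero => rw [build]; simp [members]
  | succ fuel ih =>
    induction k with
    | zero => rw [build]; simp [members]
    | succ k ihk =>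
      rw [build_succ]
      split
      · exact mem_union_left _ ihk
      · exact ihk

lemma build_spec (G : SimpleGraph V) (hadj : ∀ v, v ≠ u → G.Adj (pa v) v)
    (fuel v k) :
    (build u pa ti tm fuel v k).valid ∧ (build u pa ti tm fuel v k).edgesOK G ∧
    (∀ w ∈ (build u pa ti tm fuel v k).members,
      w = v ∨ ∃ c, c ≠ u ∧ pa c = v ∧ ti c ≤ k ∧ isDesc u pa c w) := by
  induction fuel generalizing v k with
  | zero =>
    rw [build]
    refine ⟨trivial, trivial, fun w hw => Or.inl ?_⟩
    simpa [members] using hw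
  | succ fuel ih =>
    induction k with
    | zero =>
      rw [build]
      refine ⟨trivial, trivial, fun w hw => Or.inl ?_⟩
      simpa [members] using hw
    | succ k ihk =>
      rw [build_succ]
      split
      · rename_i hne
        obtain ⟨hcu, hpc, hck⟩ := choose_spec' ht hne
        set c := hne.choose with hc
        obtain ⟨ihkV, ihkE, ihkM⟩ := ihk
        obtain ⟨ihV, ihE, ihM⟩ := ih c tm
        -- every member of the right subtree descends from c
        have hdesc : ∀ w ∈ (build u pa ti tm fuel c tm).members, isDesc u pa c w := by
          intro w hw
          rcases ihM w hw with rfl | ⟨c'', h1, h2, _, h4⟩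
          · exact ⟨0, rfl⟩
          · exact isDesc_comp ht h4 h1 h2
        refine ⟨⟨ihkV, ihV, ?_⟩, ⟨ihkE, ihE, ?_⟩, ?_⟩
        · rw [Finset.disjoint_left]
          intro w hwL hwR
          have hdw := hdesc w hwR
          rcases ihkM w hwL with rfl | ⟨c', h1, h2, h3, h4⟩
          · have h5 := isDesc_ti ht hdw
            have h6 := ht _ hcu
            rw [hpc] at h6
            omega
          · have h5 : c = c' := isDesc_unique ht hcu hpc h1 h2 hdw h4
            rw [h5] at hck
            omega
        · rw [build_root, build_root]
          have := hadj _ hcu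
          rwa [hpc] at this
        · intro w hw
          rcases Finset.mem_union.1 hw with hwL | hwR
          · rcases ihkM w hwL with rfl | ⟨c', h1, h2, h3, h4⟩
            · exact Or.inl rfl
            · exact Or.inr ⟨c', h1, h2, by omega, h4⟩
          · exact Or.inr ⟨c, hcu, hpc, hck.le, hdesc w hwR⟩
      · obtain ⟨ihkV, ihkE, ihkM⟩ := ihk
        refine ⟨ihkV, ihkE, fun w hw => ?_⟩
        rcases ihkM w hw with rfl | ⟨c', h1, h2, h3, h4⟩
        · exact Or.inl rfl
        · exact Or.inr ⟨c', h1, h2, by omega, h4⟩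

variable (hbd : ∀ v, v ≠ u → ti v ≤ tm)
  (hdist : ∀ v w, v ≠ u → w ≠ u → v ≠ w → ¬(pa v = pa w ∧ ti v = ti w))
include hbd hdist

lemma build_cover (fuel v k) (hf : tm + 1 ≤ fuel + ti v) (w c : V)
    (hcu : c ≠ u) (hpc : pa c = v) (hck : ti c ≤ k) (hd : isDesc u pa c w) :
    w ∈ (build u pa ti tm fuel v k).members := by
  induction fuel generalizing v k w c with
  | zero =>
    exfalso
    have h5 := ht c hcu
    rw [hpc] at h5
    have := hbd c hcu
    omega
  | succ fuel ih =>
    induction k generalizing w c with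
    | zero =>
      exfalso
      have := ht c hcu
      rw [hpc] at this
      omega
    | succ k ihk =>
      rw [build_succ]
      by_cases hck' : ti c ≤ k
      · split
        · exact mem_union_left _ (ihk w c hcu hpc hck' hd)
        · exact ihk w c hcu hpc hck' hd
      · have hck'' : ti c = k + 1 := by omega
        have hne : (Finset.univ.filter fun c => c ≠ u ∧ pa c = v ∧ ti c = k+1).Nonempty :=
          ⟨c, by simp [hcu, hpc, hck'']⟩
        rw [dif_pos hne]
        obtain ⟨hc0u, hpc0, hck0⟩ := choose_spec' ht hne
        have hc0 : hne.choose = c := by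
          by_contra hne'
          exact hdist _ _ hc0u hcu hne' ⟨by rw [hpc0, hpc], by rw [hck0, hck'']⟩
        rw [hc0]
        apply mem_union_right
        by_cases hwc : w = c
        · subst hwc; exact build_mem_self ht fuel w tm
        · obtain ⟨c'', h1, h2, h3⟩ := isDesc_child ht hd hwc
          apply ih _ _ (by have h9 := ht c hcu; rw [hpc] at h9; omega) w c'' h1 h2 (hbd c'' h1) h3

end lems
end Fwd

namespace BTree
variable {V : Type*} [DecidableEq V]

def sched : BTree V → ℕ → List (V × V × ℕ)
  | leaf _, _ => []
  | node t s, o =>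
      sched t o ++ (s.root, t.root, o + t.nsends + 1) :: sched s (o + t.nsends + 1)

/-- basic membership facts for entries -/
lemma sched_basic (T : BTree V) (hv : T.valid) (o : ℕ) :
    ∀ e ∈ T.sched o, e.1 ∈ T.members ∧ e.1 ≠ T.root ∧ e.2.1 ∈ T.members := by
  induction T generalizing o with
  | leaf v => intro e he; simp [sched] at he
  | node t s iht ihs =>
    obtain ⟨hvt, hvs, hdisj⟩ := hv
    intro e he
    simp only [sched, List.mem_append, List.mem_cons] at he
    rcases he with he | rfl | he
    · obtain ⟨h1, h2, h3⟩ := iht hvt o e he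
      exact ⟨mem_union_left _ h1, by rw [root]; exact h2, mem_union_left _ h3⟩
    · refine ⟨mem_union_right _ (root_mem s), ?_, mem_union_left _ (root_mem t)⟩
      show s.root ≠ (node t s).root
      rw [root]
      intro h
      have h2 : t.root ∈ s.members := by rw [← h]; exact root_mem s
      exact (Finset.disjoint_left.1 hdisj (root_mem t)) h2
    · obtain ⟨h1, h2, h3⟩ := ihs hvs _ e he
      refine ⟨mem_union_right _ h1, ?_, mem_union_right _ h3⟩
      show e.1 ≠ (node t s).root
      rw [root]
      intro h
      have h4 : t.root ∈ s.members := by rw [← h]; exact h1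
      exact (Finset.disjoint_left.1 hdisj (root_mem t)) h4

lemma sched_adj (G : SimpleGraph V) (T : BTree V) (hE : T.edgesOK G) (o : ℕ) :
    ∀ e ∈ T.sched o, G.Adj e.2.1 e.1 := by
  induction T generalizing o with
  | leaf v => intro e he; simp [sched] at he
  | node t s iht ihs =>
    obtain ⟨hEt, hEs, hadj⟩ := hE
    intro e he
    simp only [sched, List.mem_append, List.mem_cons] at he
    rcases he with he | rfl | he
    · exact iht hEt o e he
    · exact hadj
    · exact ihs hEs _ e he

lemma sched_time (T : BTree V) (hv : T.valid) (o : ℕ) :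
    ∀ e ∈ T.sched o, o < e.2.2 ∧ e.2.2 ≤ o + T.nbcost ∧
      (e.2.1 = T.root → e.2.2 ≤ o + T.nsends) := by
  induction T generalizing o with
  | leaf v => intro e he; simp [sched] at he
  | node t s iht ihs =>
    obtain ⟨hvt, hvs, hdisj⟩ := hv
    intro e he
    simp only [sched, List.mem_append, List.mem_cons] at he
    have hbc1 : t.nbcost ≤ (node t s).nbcost := le_max_left _ _
    have hbc2 : t.nsends + 1 + s.nbcost ≤ (node t s).nbcost := le_max_right _ _
    rcases he with he | rfl | he
    · obtain ⟨h1, h2, h3⟩ := iht hvt o e he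
      refine ⟨h1, by omega, fun hr => ?_⟩
      rw [root] at hr
      have := h3 hr
      show e.2.2 ≤ o + (t.nsends + 1)
      omega
    · have hn : (node t s).nsends = t.nsends + 1 := rfl
      refine ⟨?_, ?_, fun _ => ?_⟩
      · show o < o + t.nsends + 1; omega
      · show o + t.nsends + 1 ≤ o + (node t s).nbcost; omega
      · show o + t.nsends + 1 ≤ o + (node t s).nsends; omega
    · obtain ⟨h1, h2, h3⟩ := ihs hvs _ e he
      refine ⟨by omega, by omega, fun hr => ?_⟩
      exfalso
      rw [root] at hr
      have hmem := (sched_basic s hvs _ e he).2.2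
      rw [hr] at hmem
      exact (Finset.disjoint_left.1 hdisj (root_mem t)) hmem

lemma sched_parent (T : BTree V) (hv : T.valid) (o : ℕ) :
    ∀ e ∈ T.sched o, e.2.1 = T.root ∨
      ∃ e' ∈ T.sched o, e'.1 = e.2.1 ∧ e'.2.2 < e.2.2 := by
  induction T generalizing o with
  | leaf v => intro e he; simp [sched] at he
  | node t s iht ihs =>
    obtain ⟨hvt, hvs, hdisj⟩ := hv
    intro e he
    have hmem : ∀ e' ∈ t.sched o, e' ∈ (node t s).sched o := by
      intro e' h; simp only [sched, List.mem_append]; exact Or.inl h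
    have hmem2 : ∀ e' ∈ s.sched (o + t.nsends + 1), e' ∈ (node t s).sched o := by
      intro e' h; simp only [sched, List.mem_append, List.mem_cons]
      exact Or.inr (Or.inr h)
    have hmemN : (s.root, t.root, o + t.nsends + 1) ∈ (node t s).sched o := by
      simp only [sched, List.mem_append, List.mem_cons]
      exact Or.inr (Or.inl trivial)
    simp only [sched, List.mem_append, List.mem_cons] at he
    rcases he with he | rfl | he
    · rcases iht hvt o e he with h | ⟨e', h1, h2, h3⟩
      · exact Or.inl (by rw [root]; exact h)
      · exact Or.inr ⟨e', hmem e' h1, h2, h3⟩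
    · exact Or.inl (by rw [root])
    · rcases ihs hvs _ e he with h | ⟨e', h1, h2, h3⟩
      · refine Or.inr ⟨(s.root, t.root, o + t.nsends + 1), hmemN, h.symm, ?_⟩
        exact (sched_time s hvs _ e he).1
      · exact Or.inr ⟨e', hmem2 e' h1, h2, h3⟩

/-- entries are uniquely determined by their vertex -/
lemma sched_uniq1 (T : BTree V) (hv : T.valid) (o : ℕ) :
    ∀ e ∈ T.sched o, ∀ e' ∈ T.sched o, e.1 = e'.1 → e = e' := by
  induction T generalizing o with
  | leaf v => intro e he; simp [sched] at he
  | node t s iht ihs =>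
    obtain ⟨hvt, hvs, hdisj⟩ := hv
    intro e he e' he' h
    simp only [sched, List.mem_append, List.mem_cons] at he he'
    have bt := sched_basic t hvt o
    have bs := sched_basic s hvs (o + t.nsends + 1)
    rcases he with he | rfl | he <;> rcases he' with he' | rfl | he'
    · exact iht hvt o e he e' he' h
    · exfalso
      have h2 : e.1 ∈ s.members := by
        rw [show e.1 = s.root from h]; exact root_mem s
      exact (Finset.disjoint_left.1 hdisj (bt e he).1) h2
    · exfalso
      have h2 : e.1 ∈ s.members := by rw [h]; exact (bs e' he').1
      exact (Finset.disjoint_left.1 hdisj (bt e he).1) h2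
    · exfalso
      have h2 : e'.1 ∈ s.members := by
        rw [← show s.root = e'.1 from h]; exact root_mem s
      exact (Finset.disjoint_left.1 hdisj (bt e' he').1) h2
    · rfl
    · exact (((bs e' he').2.1) (show s.root = e'.1 from h).symm).elim
    · exfalso
      have h2 : e'.1 ∈ s.members := by rw [← h]; exact (bs e he).1
      exact (Finset.disjoint_left.1 hdisj (bt e' he').1) h2
    · exact (((bs e he).2.1) (show e.1 = s.root from h)).elim
    · exact ihs hvs _ e he e' he' h

/-- entries are uniquely determined by (parent, time) -/
lemma sched_uniq2 (T : BTree V) (hv : T.valid) (o : ℕ) :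
    ∀ e ∈ T.sched o, ∀ e' ∈ T.sched o, e.2.1 = e'.2.1 → e.2.2 = e'.2.2 → e = e' := by
  induction T generalizing o with
  | leaf v => intro e he; simp [sched] at he
  | node t s iht ihs =>
    obtain ⟨hvt, hvs, hdisj⟩ := hv
    intro e he e' he' h1 h2
    simp only [sched, List.mem_append, List.mem_cons] at he he'
    have bt := sched_basic t hvt o
    have bs := sched_basic s hvs (o + t.nsends + 1)
    have tt := sched_time t hvt o
    rcases he with he | rfl | he <;> rcases he' with he' | rfl | he'
    · exact iht hvt o e he e' he' h1 h2
    · exfalso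
      have h3 := (tt e he).2.2 (show e.2.1 = t.root from h1)
      have h4 : e.2.2 = o + t.nsends + 1 := h2
      omega
    · exfalso
      have h3 : e.2.1 ∈ s.members := by rw [h1]; exact (bs e' he').2.2
      exact (Finset.disjoint_left.1 hdisj ((bt e he).2.2)) h3
    · exfalso
      have h3 := (tt e' he').2.2 (show e'.2.1 = t.root from h1.symm)
      have h4 : e'.2.2 = o + t.nsends + 1 := h2.symm
      omega
    · rfl
    · exfalso
      have h3 : t.root ∈ s.members := by
        rw [show t.root = e'.2.1 from h1]; exact (bs e' he').2.2
      exact (Finset.disjoint_left.1 hdisj (root_mem t)) h3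
    · exfalso
      have h3 : e'.2.1 ∈ s.members := by rw [← h1]; exact (bs e he).2.2
      exact (Finset.disjoint_left.1 hdisj ((bt e' he').2.2)) h3
    · exfalso
      have h3 : t.root ∈ s.members := by
        rw [show t.root = e.2.1 from h1.symm]; exact (bs e he).2.2
      exact (Finset.disjoint_left.1 hdisj (root_mem t)) h3
    · exact ihs hvs _ e he e' he' h1 h2

lemma sched_total (T : BTree V) (hv : T.valid) (o : ℕ) :
    ∀ v ∈ T.members, v ≠ T.root → ∃ e ∈ T.sched o, e.1 = v := by
  induction T generalizing o with
  | leaf w =>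
    intro v hv' hne
    simp only [members, mem_singleton] at hv'
    exact absurd hv' hne
  | node t s iht ihs =>
    obtain ⟨hvt, hvs, hdisj⟩ := hv
    intro v hv' hne
    rw [root] at hne
    rcases mem_union.1 hv' with h | h
    · obtain ⟨e, he, h2⟩ := iht hvt o v h hne
      exact ⟨e, by simp only [sched, List.mem_append]; exact Or.inl he, h2⟩
    · by_cases hr : v = s.root
      · refine ⟨(s.root, t.root, o + t.nsends + 1), ?_, hr.symm⟩
        simp only [sched, List.mem_append, List.mem_cons]
        exact Or.inr (Or.inl trivial)
      · obtain ⟨e, he, h2⟩ := ihs hvs (o + t.nsends + 1) v h hr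
        refine ⟨e, ?_, h2⟩
        simp only [sched, List.mem_append, List.mem_cons]
        exact Or.inr (Or.inr he)

end BTree


/-- `G` admits a (synchronous, telephone-model) broadcast from `u` completing within `t`
rounds: every vertex other than `u` receives the message from an informed neighbour, in
some round `≤ t`, with no vertex sending twice in the same round. -/
def CanBroadcast {V : Type*} [Fintype V] [DecidableEq V] (G : SimpleGraph V) (u : V)
    (t : ℕ) : Prop :=
  ∃ (parent : V → V) (time : V → ℕ),
    time u = 0 ∧
    (∀ v, v ≠ u → G.Adj (parent v) v ∧ time (parent v) < time v ∧ time v ≤ t) ∧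
    (∀ v w, v ≠ u → w ≠ u → v ≠ w → ¬(parent v = parent w ∧ time v = time w))

/-- Minimum Broadcast Time reduction: with `α_{vw} = 1` on edges of `G` (`∞` otherwise),
`β = 1` and unit message size, `G` admits a broadcast from `u` in `t` synchronous rounds
iff there is a broadcast tree rooted at `u` (all transmissions along edges of `G`, each
costing `2`, performed sequentially at each vertex) with completion cost at most `2t`. -/
theorem stmt_14 {V : Type*} [Fintype V] [DecidableEq V] (G : SimpleGraph V) (u : V)
    (t : ℕ) :
    CanBroadcast G u t ↔
    ∃ T : BTree V, T.valid ∧ T.members = Finset.univ ∧ T.root = u ∧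
      T.edgesOK G ∧ T.bcost ≤ 2 * (t : ℝ) := by
  constructor
  · rintro ⟨pa, ti, H1, H2, H3⟩
    have ht : ∀ v, v ≠ u → ti (pa v) < ti v := fun v hv => (H2 v hv).2.1
    have hadj : ∀ v, v ≠ u → G.Adj (pa v) v := fun v hv => (H2 v hv).1
    have hbd : ∀ v, v ≠ u → ti v ≤ t := fun v hv => (H2 v hv).2.2
    refine ⟨build u pa ti t (t+1) u t, (build_spec ht G hadj (t+1) u t).1, ?_,
      build_root (t+1) u t, (build_spec ht G hadj (t+1) u t).2.1, ?_⟩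
    · rw [Finset.eq_univ_iff_forall]
      intro w
      by_cases hw : w = u
      · subst hw; exact build_mem_self ht (t+1) w t
      · obtain ⟨c, hcu, hpc, hd⟩ := isDesc_child ht (isDesc_univ ht w) hw
        exact build_cover ht hbd H3 (t+1) u t (by rw [H1]) w c hcu hpc (hbd c hcu) hd
    · have := build_bcost ht (t+1) u t (by rw [H1]; omega) le_rfl
      rw [H1] at this
      simpa using this
  · rintro ⟨T, hval, hmem, hroot, hE, hbc⟩
    classical
    set L := T.sched 0 with hL
    have hnb : T.nbcost ≤ t := by
      rw [bcost_eq T] at hbc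
      have h : (T.nbcost : ℝ) ≤ t := by linarith
      exact_mod_cast h
    have hex : ∀ v : V, v ≠ u → ∃ e, e ∈ L ∧ e.1 = v := by
      intro v hv
      obtain ⟨e, he, h2⟩ := sched_total T hval 0 v (by rw [hmem]; exact mem_univ v)
        (by rw [hroot]; exact hv)
      exact ⟨e, he, h2⟩
    set E : V → V × V × ℕ :=
      fun v => if h : ∃ e, e ∈ L ∧ e.1 = v then h.choose else (v, u, 0) with hE'
    have hEspec : ∀ v, v ≠ u → E v ∈ L ∧ (E v).1 = v := by
      intro v hv
      rw [hE']
      simp only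
      rw [dif_pos (hex v hv)]
      exact (hex v hv).choose_spec
    have hEu : E u = (u, u, 0) := by
      rw [hE']
      simp only
      rw [dif_neg]
      rintro ⟨e, he, h2⟩
      exact (sched_basic T hval 0 e he).2.1 (h2.trans hroot.symm)
    refine ⟨fun v => (E v).2.1, fun v => (E v).2.2, by show (E u).2.2 = 0; rw [hEu], ?_, ?_⟩
    · intro v hv
      obtain ⟨heL, he1⟩ := hEspec v hv
      refine ⟨?_, ?_, ?_⟩
      · have := sched_adj G T hE 0 (E v) heL
        rwa [he1] at this
      · show (E ((E v).2.1)).2.2 < (E v).2.2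
        rcases sched_parent T hval 0 (E v) heL with hp | ⟨e', he', h1', h2'⟩
        · rw [hp.trans hroot, hEu]
          exact (sched_time T hval 0 (E v) heL).1
        · have hp'u : e'.1 ≠ u := fun h =>
            (sched_basic T hval 0 e' he').2.1 (h.trans hroot.symm)
          have h3 : (E v).2.1 ≠ u := by rw [← h1']; exact hp'u
          obtain ⟨hL2, h12⟩ := hEspec _ h3
          have h4 : E ((E v).2.1) = e' :=
            sched_uniq1 T hval 0 _ hL2 e' he' (by rw [h12, h1'])
          rw [h4]
          exact h2'
      · show (E v).2.2 ≤ t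
        have := (sched_time T hval 0 (E v) heL).2.1
        omega
    · rintro v w hv hw hvw ⟨hp, htt⟩
      obtain ⟨heLv, he1v⟩ := hEspec v hv
      obtain ⟨heLw, he1w⟩ := hEspec w hw
      have : E v = E w := sched_uniq2 T hval 0 (E v) heLv (E w) heLw hp htt
      exact hvw (by rw [← he1v, this, he1w])
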